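/- Let k ≥ 1 and r ≥ 0 be integers and Q₁, …, Q_k ∈ ℂ[z] polynomials with deg Qᵢ ≤ i + r for 1 ≤ i ≤ k and deg Q_k = k + r. Let ℛ be the maximum of the moduli of the roots of Q_k. For every δ > 0 there exists a natural number N_δ such that for all n ≥ N_δ the following holds: if V ∈ ℂ[z] with deg V ≤ r and a nonzero polynomial S ∈ ℂ[z] of degree exactly n satisfy Σ_{i=1}^k Qᵢ·S^{(i)} + V·S = 0, then every root of V and every root of S has modulus at most ℛ + δ. -/

import Mathlib

open Polynomial Finset

namespace Stmt13Aux

lemma re_div_ge_half {w ξ : ℂ} (h : Complex.normSq ξ ≤ Complex.normSq w) (hne : w - ξ ≠ 0) :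
    (1 / 2 : ℝ) ≤ (w / (w - ξ)).re := by
  have hns : 0 < Complex.normSq (w - ξ) := Complex.normSq_pos.mpr hne
  rw [Complex.div_re, ← add_div, le_div_iff₀ hns]
  simp only [Complex.normSq_apply, Complex.sub_re, Complex.sub_im] at *
  nlinarith [hns]

lemma logderiv_re (w : ℂ) : ∀ (N : ℕ) (P : Polynomial ℂ), P.natDegree = N → P ≠ 0 →
    (∀ ξ ∈ P.roots, ‖ξ‖ ≤ ‖w‖) → P.eval w ≠ 0 →
    (N : ℝ) / 2 ≤ (w * ((derivative P).eval w) / P.eval w).re := by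
  intro N
  induction N with
  | zero =>
    intro P hdeg _ _ _
    obtain ⟨a, rfl⟩ : ∃ a, P = C a := ⟨P.coeff 0, Polynomial.eq_C_of_natDegree_eq_zero hdeg⟩
    simp
  | succ N ih =>
    intro P hdeg hP hroots hw
    have hdegpos : 0 < P.degree := by
      rw [Polynomial.degree_eq_natDegree hP, hdeg]
      exact_mod_cast Nat.succ_pos N
    obtain ⟨ξ, hξ⟩ := Complex.exists_root hdegpos
    have hξr : ξ ∈ P.roots := (Polynomial.mem_roots hP).2 hξ
    obtain ⟨T, hT⟩ := Polynomial.dvd_iff_isRoot.mpr hξ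
    have hT0 : T ≠ 0 := by
      rintro rfl
      rw [mul_zero] at hT
      exact hP hT
    have hXC : (X - C ξ : Polynomial ℂ) ≠ 0 := Polynomial.X_sub_C_ne_zero ξ
    have hTdeg : T.natDegree = N := by
      have h1 := Polynomial.natDegree_mul hXC hT0
      rw [← hT, hdeg, Polynomial.natDegree_X_sub_C] at h1
      omega
    have hProots : (X - C ξ) * T ≠ 0 := by rw [← hT]; exact hP
    have hTroots : ∀ ζ ∈ T.roots, ‖ζ‖ ≤ ‖w‖ := by
      intro ζ hζ
      apply hroots
      rw [hT, Polynomial.roots_mul hProots]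
      exact Multiset.mem_add.mpr (Or.inr hζ)
    have hwξ : w - ξ ≠ 0 := by
      intro h0
      apply hw
      have hwe : w = ξ := by
        have := sub_eq_zero.mp h0; exact this
      rw [hwe]
      exact hξ
    have hTw : T.eval w ≠ 0 := by
      intro h0
      apply hw
      rw [hT, Polynomial.eval_mul, h0, mul_zero]
    have hIH := ih T hTdeg hT0 hTroots hTw
    have hval : w * ((derivative P).eval w) / P.eval w
        = w / (w - ξ) + w * ((derivative T).eval w) / T.eval w := by
      rw [hT]
      simp only [derivative_mul, derivative_sub, derivative_X, derivative_C, sub_zero, one_mul,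
        Polynomial.eval_add, Polynomial.eval_mul, Polynomial.eval_sub, Polynomial.eval_X,
        Polynomial.eval_C]
      field_simp
    rw [hval, Complex.add_re]
    have hns : Complex.normSq ξ ≤ Complex.normSq w := by
      rw [← Complex.sq_norm, ← Complex.sq_norm]
      have h1 : ‖ξ‖ ≤ ‖w‖ := by
        exact hroots ξ hξr
      exact pow_le_pow_left₀ (norm_nonneg _) h1 2
    have h1 := re_div_ge_half hns hwξ
    push_cast
    linarith

lemma deriv_roots_le {P : Polynomial ℂ} {b : ℝ} (h : ∀ ξ ∈ P.roots, ‖ξ‖ ≤ b) :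
    ∀ ξ ∈ (derivative P).roots, ‖ξ‖ ≤ b := by
  intro ξ' hξ'
  by_contra hgt
  push_neg at hgt
  have hd0 : derivative P ≠ 0 := (Polynomial.mem_roots'.mp hξ').1
  have hP : P ≠ 0 := by rintro rfl; simp at hd0
  have hPd : P.natDegree ≠ 0 := fun h0 => hd0 (Polynomial.derivative_of_natDegree_zero h0)
  have hPw : P.eval ξ' ≠ 0 := by
    intro h0
    exact absurd (h ξ' ((Polynomial.mem_roots hP).2 h0)) (not_le.mpr hgt)
  have hlog := logderiv_re ξ' P.natDegree P rfl hP (fun ζ hζ => (h ζ hζ).trans hgt.le) hPw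
  have hz : (derivative P).eval ξ' = 0 := (Polynomial.mem_roots'.mp hξ').2
  rw [hz] at hlog
  simp only [mul_zero, zero_div, Complex.zero_re] at hlog
  have h3 : (1 : ℝ) ≤ (P.natDegree : ℝ) := by exact_mod_cast Nat.one_le_iff_ne_zero.mpr hPd
  linarith

lemma iterate_deriv_roots_le {S : Polynomial ℂ} {b : ℝ} (h : ∀ ξ ∈ S.roots, ‖ξ‖ ≤ b) :
    ∀ (j : ℕ), ∀ ξ ∈ (derivative^[j] S).roots, ‖ξ‖ ≤ b := by
  intro j
  induction j with
  | zero => simpa using h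
  | succ j ih =>
    rw [Function.iterate_succ_apply']
    exact deriv_roots_le ih

lemma iterate_deriv_ne_zero {S : Polynomial ℂ} (hS : S ≠ 0) :
    ∀ j, j ≤ S.natDegree → derivative^[j] S ≠ 0 ∧
      (derivative^[j] S).natDegree = S.natDegree - j := by
  intro j
  induction j with
  | zero => intro _; exact ⟨hS, by simp⟩
  | succ j ih =>
    intro hj
    obtain ⟨h1, h2⟩ := ih (by omega)
    have hpos : 0 < (derivative^[j] S).natDegree := by omega
    have hdd := Polynomial.degree_derivative_eq _ hpos
    rw [Function.iterate_succ_apply']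
    constructor
    · intro h0
      rw [h0, Polynomial.degree_zero] at hdd
      simp at hdd
    · have h3 := Polynomial.natDegree_eq_of_degree_eq_some hdd
      omega

lemma eval_iterate_rootMultiplicity_ne_zero {S : Polynomial ℂ} (hS : S ≠ 0) (w : ℂ) :
    (derivative^[Polynomial.rootMultiplicity w S] S).eval w ≠ 0 := by
  rw [Polynomial.eval_iterate_derivative_rootMultiplicity]
  rw [nsmul_eq_mul]
  exact mul_ne_zero (by exact_mod_cast Nat.factorial_ne_zero _)
    (Polynomial.eval_divByMonic_pow_rootMultiplicity_ne_zero w hS)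

lemma pow_card_le_prod_norm (s : Multiset ℂ) (b : ℝ) (hb : 0 ≤ b)
    (h : ∀ x ∈ s, b ≤ ‖x‖) : b ^ (Multiset.card s) ≤ ‖s.prod‖ := by
  induction s using Multiset.induction_on with
  | empty => simp
  | cons a s ih =>
    have ha := h a (Multiset.mem_cons_self a s)
    have hs := ih fun x hx => h x (Multiset.mem_cons_of_mem hx)
    rw [Multiset.prod_cons, Multiset.card_cons, norm_mul, pow_succ, mul_comm (b ^ Multiset.card s) b]
    exact mul_le_mul ha hs (pow_nonneg hb _) (norm_nonneg a)

lemma eval_lc_lower {P : Polynomial ℂ} {dP : ℕ} (hdP : P.degree = (dP : ℕ))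
    {R : ℝ} (hub : ∀ x ∈ P.roots, ‖x‖ ≤ R) {w : ℂ} (hgt : R ≤ ‖w‖) (hR0 : 0 ≤ R) :
    ‖P.leadingCoeff‖ * (‖w‖ - R) ^ dP ≤ ‖P.eval w‖ := by
  have hP : P ≠ 0 := fun h => by simp [h] at hdP
  have hsplit : Splits P := IsAlgClosed.splits P
  have hcard : Multiset.card P.roots = dP := by
    rw [Polynomial.splits_iff_card_roots.mp hsplit]
    exact Polynomial.natDegree_eq_of_degree_eq_some hdP
  have hfact := hsplit.eq_prod_roots
  have heval : P.eval w = P.leadingCoeff * ((P.roots.map (fun a => w - a)).prod) := by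
    conv_lhs => rw [hfact]
    rw [Polynomial.eval_mul, Polynomial.eval_C, Polynomial.eval_multiset_prod, Multiset.map_map]
    congr 1
    refine congrArg Multiset.prod ?_
    apply Multiset.map_congr rfl
    intro x _
    simp
  rw [heval, norm_mul]
  have hprod : (‖w‖ - R) ^ dP ≤ ‖(P.roots.map (fun a => w - a)).prod‖ := by
    have h2 := pow_card_le_prod_norm (P.roots.map (fun a => w - a)) (‖w‖ - R)
      (by linarith) ?_
    · rwa [Multiset.card_map, hcard] at h2
    · intro x hx
      obtain ⟨a, ha, rfl⟩ := Multiset.mem_map.mp hx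
      have h1 := hub a ha
      have h3 := norm_sub_norm_le w a
      linarith
  exact mul_le_mul_of_nonneg_left hprod (norm_nonneg _)

lemma eval_upper {P : Polynomial ℂ} {d : ℕ} (hd : P.degree ≤ (d : ℕ)) {w : ℂ} {M : ℝ}
    (hM : 1 ≤ M) (hw : ‖w‖ ≤ M) :
    ‖P.eval w‖ ≤ (∑ a ∈ range (d + 1), ‖P.coeff a‖) * M ^ d := by
  have hnd : P.natDegree < d + 1 :=
    Nat.lt_succ_of_le (Polynomial.natDegree_le_iff_degree_le.mpr hd)
  rw [Polynomial.eval_eq_sum_range' hnd]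
  refine (norm_sum_le _ _).trans ?_
  rw [Finset.sum_mul]
  apply Finset.sum_le_sum
  intro a ha
  rw [norm_mul, norm_pow]
  refine mul_le_mul_of_nonneg_left ?_ (norm_nonneg _)
  calc ‖w‖ ^ a ≤ M ^ a := pow_le_pow_left₀ (norm_nonneg w) hw a
    _ ≤ M ^ d := pow_le_pow_right₀ hM (by have := Finset.mem_range.mp ha; omega)

lemma M_le_K_mul {R ε ρ : ℝ} (hR : 0 ≤ R) (hε : 0 < ε) (h : R + ε < ρ) :
    max 1 ρ ≤ (max 1 (R + ε) / ε) * (ρ - R) := by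
  rw [div_mul_eq_mul_div, le_div_iff₀ hε]
  rcases max_cases 1 ρ with ⟨hM, hM'⟩ | ⟨hM, hM'⟩ <;>
    rcases max_cases 1 (R + ε) with ⟨hK, hK'⟩ | ⟨hK, hK'⟩ <;> rw [hM, hK]
  · nlinarith
  · nlinarith
  · nlinarith [mul_nonneg (by linarith : (0:ℝ) ≤ ρ - 1) (by linarith : (0:ℝ) ≤ 1 - ε)]
  · nlinarith [mul_nonneg hR (by linarith : (0:ℝ) ≤ ρ - R - ε)]

set_option maxHeartbeats 1600000 in
lemma core {k r : ℕ} (hk : 1 ≤ k) {Q : ℕ → Polynomial ℂ}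
    (hdeg : ∀ i, 1 ≤ i → i ≤ k → (Q i).degree ≤ (i + r : ℕ))
    (hQk : (Q k).degree = (k + r : ℕ))
    {R : ℝ} (hR0 : 0 ≤ R) (hub : ∀ x ∈ (Q k).roots, ‖x‖ ≤ R)
    {ε : ℝ} (hε : 0 < ε)
    {n : ℕ} (hkn : k ≤ n)
    {S : Polynomial ℂ} (hS : S ≠ 0) (hSdeg : S.natDegree = n)
    {w : ℂ} (hw : R + ε < ‖w‖)
    (hroots : ∀ ξ ∈ S.roots, ‖ξ‖ ≤ ‖w‖)
    (hmk : Polynomial.rootMultiplicity w S ≤ k)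
    (heval : ∑ i ∈ Icc 1 k, (Q i).eval w * ((derivative^[i] S).eval w) = 0) :
    ‖(Q k).leadingCoeff‖ * ((n : ℝ) - k + 1)
      ≤ (k * (∑ i ∈ Icc 1 k, ∑ a ∈ range (k + r + 1), ‖(Q i).coeff a‖) * 2 ^ k)
        * (max 1 (R + ε) / ε) ^ (k + r) := by
  have hρ0 : 0 < ‖w‖ := lt_of_le_of_lt (by linarith) hw
  set ρ := ‖w‖ with hρdef
  set m := Polynomial.rootMultiplicity w S with hmdef
  set t : ℝ := (n : ℝ) - k + 1 with htdef
  have ht1 : (1 : ℝ) ≤ t := by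
    have : (k : ℝ) ≤ (n : ℝ) := by exact_mod_cast hkn
    rw [htdef]; linarith
  have ht0 : 0 < t := by linarith
  set c : ℝ := t / (2 * ρ) with hcdef
  have hc : 0 < c := div_pos ht0 (by linarith)
  set Φ : ℕ → ℂ := fun j => (derivative^[j] S).eval w with hΦdef
  have hbase : Φ m ≠ 0 := Stmt13Aux.eval_iterate_rootMultiplicity_ne_zero hS w
  -- the inductive step
  have hstep : ∀ j, m ≤ j → j < k → Φ j ≠ 0 → (Φ (j + 1) ≠ 0 ∧ c * ‖Φ j‖ ≤ ‖Φ (j + 1)‖) := by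
    intro j hmj hjk hΦj
    have hjn : j ≤ n := le_trans (le_of_lt hjk) hkn
    obtain ⟨hne, hdegj⟩ := Stmt13Aux.iterate_deriv_ne_zero hS j (by rw [hSdeg]; exact hjn)
    have hrootsj := Stmt13Aux.iterate_deriv_roots_le hroots j
    have hlog := Stmt13Aux.logderiv_re w (n - j) (derivative^[j] S)
      (by rw [hdegj, hSdeg]) hne hrootsj hΦj
    rw [← Function.iterate_succ_apply' derivative j S] at hlog
    have hcast : ((n - j : ℕ) : ℝ) = (n : ℝ) - j := by
      push_cast [Nat.cast_sub hjn]; ring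
    rw [hcast] at hlog
    have habs : (w * Φ (j + 1) / Φ j).re ≤ ρ * ‖Φ (j + 1)‖ / ‖Φ j‖ := by
      refine (Complex.re_le_norm _).trans ?_
      rw [norm_div, norm_mul]
    have hΦjpos : 0 < ‖Φ j‖ := norm_pos_iff.mpr hΦj
    have hmain : ((n : ℝ) - j) * ‖Φ j‖ ≤ 2 * ρ * ‖Φ (j + 1)‖ := by
      have h2 : ((n : ℝ) - j) / 2 ≤ ρ * ‖Φ (j + 1)‖ / ‖Φ j‖ := le_trans hlog habs
      rw [div_le_div_iff₀ (by norm_num) hΦjpos] at h2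
      linarith
    have hjr : (j : ℝ) + 1 ≤ (k : ℝ) := by exact_mod_cast hjk
    have hineq : c * ‖Φ j‖ ≤ ‖Φ (j + 1)‖ := by
      rw [hcdef, div_mul_eq_mul_div, div_le_iff₀ (by linarith : (0:ℝ) < 2 * ρ)]
      have htn : t ≤ (n : ℝ) - j := by rw [htdef]; linarith
      nlinarith
    refine ⟨?_, hineq⟩
    intro h0
    rw [h0, norm_zero] at hineq
    nlinarith
  -- the chain
  have hchain : ∀ j, m ≤ j → j ≤ k →
      (Φ j ≠ 0 ∧ ∀ i, m ≤ i → i ≤ j → ‖Φ i‖ * c ^ (j - i) ≤ ‖Φ j‖) := by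
    intro j
    induction j with
    | zero =>
      intro h0 _
      have hm0 : m = 0 := Nat.le_zero.mp h0
      refine ⟨hm0 ▸ hbase, ?_⟩
      intro i _ hi0
      have : i = 0 := Nat.le_zero.mp hi0
      simp [this]
    | succ j ih =>
      intro hmj hjk
      rcases Nat.eq_or_lt_of_le hmj with heq | hlt
      · refine ⟨heq ▸ hbase, ?_⟩
        intro i hmi hij
        have : i = j + 1 := by omega
        simp [this]
      · have hmj' : m ≤ j := by omega
        obtain ⟨h1, h2⟩ := ih hmj' (by omega)
        obtain ⟨h3, h4⟩ := hstep j hmj' (by omega) h1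
        refine ⟨h3, ?_⟩
        intro i hmi hij
        rcases Nat.eq_or_lt_of_le hij with heq2 | hlt2
        · simp [heq2]
        · have hij' : i ≤ j := by omega
          have h5 := h2 i hmi hij'
          have hpow : c ^ (j + 1 - i) = c ^ (j - i) * c := by
            rw [← pow_succ]
            congr 1
            omega
          rw [hpow, ← mul_assoc]
          calc ‖Φ i‖ * c ^ (j - i) * c ≤ ‖Φ j‖ * c :=
                mul_le_mul_of_nonneg_right h5 (le_of_lt hc)
            _ ≤ ‖Φ (j + 1)‖ := by rw [mul_comm]; exact h4
  obtain ⟨hΦk, hΦkch⟩ := hchain k hmk le_rfl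
  have hΦkpos : 0 < ‖Φ k‖ := norm_pos_iff.mpr hΦk
  -- constants
  set M : ℝ := max 1 ρ with hMdef
  have hM1 : (1 : ℝ) ≤ M := le_max_left _ _
  have hρM : ρ ≤ M := le_max_right _ _
  have hM0 : (0 : ℝ) ≤ M := by linarith
  set Cm : ℝ := ∑ i ∈ Icc 1 k, ∑ a ∈ range (k + r + 1), ‖(Q i).coeff a‖ with hCmdef
  have hCm0 : 0 ≤ Cm := by
    rw [hCmdef]
    exact Finset.sum_nonneg fun i _ => Finset.sum_nonneg fun a _ => norm_nonneg _
  have hCi : ∀ i, 1 ≤ i → i ≤ k → ‖(Q i).eval w‖ ≤ Cm * M ^ (i + r) := by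
    intro i h1i hik
    have hup := Stmt13Aux.eval_upper (hdeg i h1i hik) hM1 hρM
    refine hup.trans ?_
    refine mul_le_mul_of_nonneg_right ?_ (pow_nonneg hM0 _)
    calc ∑ a ∈ range (i + r + 1), ‖(Q i).coeff a‖
        ≤ ∑ a ∈ range (k + r + 1), ‖(Q i).coeff a‖ := by
          apply Finset.sum_le_sum_of_subset_of_nonneg
          · exact Finset.range_subset_range.mpr (by omega)
          · intro a _ _; exact norm_nonneg _
      _ ≤ Cm := by
          rw [hCmdef]
          exact Finset.single_le_sum
            (f := fun i => ∑ a ∈ range (k + r + 1), ‖(Q i).coeff a‖)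
            (fun i _ => Finset.sum_nonneg fun a _ => norm_nonneg _)
            (Finset.mem_Icc.mpr ⟨h1i, hik⟩)
  obtain ⟨k', rfl⟩ : ∃ k', k = k' + 1 := ⟨k - 1, by omega⟩
  have h2nn : (0:ℝ) ≤ 2 ^ (k' + 1) := by norm_num
  -- split off the top term
  rw [Finset.sum_Icc_succ_top (by omega : 1 ≤ k' + 1)] at heval
  have hQΦ : (Q (k' + 1)).eval w * Φ (k' + 1)
      = -∑ i ∈ Icc 1 k', (Q i).eval w * Φ i :=
    eq_neg_of_add_eq_zero_right heval
  -- per-term bound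
  have hterm : ∀ i ∈ Icc 1 k', ‖(Q i).eval w‖ * ‖Φ i‖ * t
      ≤ Cm * 2 ^ (k' + 1) * M ^ (k' + 1 + r) * ‖Φ (k' + 1)‖ := by
    intro i hi
    obtain ⟨h1i, hik'⟩ := Finset.mem_Icc.mp hi
    rcases Nat.lt_or_ge i m with him | hmi
    · have hzero : Φ i = 0 :=
        Polynomial.isRoot_iterate_derivative_of_lt_rootMultiplicity him
      rw [hzero, norm_zero, mul_zero, zero_mul]
      exact mul_nonneg (mul_nonneg (mul_nonneg hCm0 h2nn) (pow_nonneg hM0 _)) (norm_nonneg _)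
    · have hch := hΦkch i hmi (by omega)
      have hkipos : i ≤ k' + 1 := by omega
      have e1 : c ^ (k' + 1 - i) * (2 * ρ) ^ (k' + 1 - i) = t ^ (k' + 1 - i) := by
        rw [← mul_pow, hcdef, div_mul_cancel₀ _ (ne_of_gt (by linarith : (0:ℝ) < 2 * ρ))]
      have h2 : ‖Φ i‖ * t ^ (k' + 1 - i) ≤ (2 * ρ) ^ (k' + 1 - i) * ‖Φ (k' + 1)‖ := by
        calc ‖Φ i‖ * t ^ (k' + 1 - i)
            = (‖Φ i‖ * c ^ (k' + 1 - i)) * (2 * ρ) ^ (k' + 1 - i) := by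
              rw [mul_assoc, e1]
          _ ≤ ‖Φ (k' + 1)‖ * (2 * ρ) ^ (k' + 1 - i) :=
              mul_le_mul_of_nonneg_right hch (pow_nonneg (by linarith) _)
          _ = (2 * ρ) ^ (k' + 1 - i) * ‖Φ (k' + 1)‖ := mul_comm _ _
      have h3 : t ≤ t ^ (k' + 1 - i) := le_self_pow₀ ht1 (by omega)
      have h4 : ‖Φ i‖ * t ≤ (2 * ρ) ^ (k' + 1 - i) * ‖Φ (k' + 1)‖ :=
        le_trans (mul_le_mul_of_nonneg_left h3 (norm_nonneg _)) h2
      have h5 : (2 * ρ) ^ (k' + 1 - i) ≤ 2 ^ (k' + 1) * M ^ (k' + 1 - i) := by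
        rw [mul_pow]
        refine mul_le_mul ?_ (pow_le_pow_left₀ (by linarith) hρM _)
          (pow_nonneg (by linarith) _) h2nn
        exact pow_le_pow_right₀ (by norm_num) (by omega)
      have h6 : M ^ (i + r) * M ^ (k' + 1 - i) = M ^ (k' + 1 + r) := by
        rw [← pow_add]
        congr 1
        omega
      calc ‖(Q i).eval w‖ * ‖Φ i‖ * t = ‖(Q i).eval w‖ * (‖Φ i‖ * t) := by ring
        _ ≤ (Cm * M ^ (i + r)) * ((2 * ρ) ^ (k' + 1 - i) * ‖Φ (k' + 1)‖) :=
            mul_le_mul (hCi i h1i hkipos) h4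
              (mul_nonneg (norm_nonneg _) (by linarith))
              (mul_nonneg hCm0 (pow_nonneg hM0 _))
        _ ≤ (Cm * M ^ (i + r)) * ((2 ^ (k' + 1) * M ^ (k' + 1 - i)) * ‖Φ (k' + 1)‖) := by
            refine mul_le_mul_of_nonneg_left ?_ (mul_nonneg hCm0 (pow_nonneg hM0 _))
            exact mul_le_mul_of_nonneg_right h5 (norm_nonneg _)
        _ = Cm * 2 ^ (k' + 1) * (M ^ (i + r) * M ^ (k' + 1 - i)) * ‖Φ (k' + 1)‖ := by ring
        _ = Cm * 2 ^ (k' + 1) * M ^ (k' + 1 + r) * ‖Φ (k' + 1)‖ := by rw [h6]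
  -- sum bound
  have hsum : ‖(Q (k' + 1)).eval w‖ * ‖Φ (k' + 1)‖ * t
      ≤ (k' : ℝ) * (Cm * 2 ^ (k' + 1) * M ^ (k' + 1 + r) * ‖Φ (k' + 1)‖) := by
    have h7 : ‖(Q (k' + 1)).eval w * Φ (k' + 1)‖
        ≤ ∑ i ∈ Icc 1 k', ‖(Q i).eval w‖ * ‖Φ i‖ := by
      rw [hQΦ, norm_neg]
      refine (norm_sum_le _ _).trans ?_
      apply Finset.sum_le_sum
      intro i _
      rw [norm_mul]
    rw [← norm_mul]
    calc ‖(Q (k' + 1)).eval w * Φ (k' + 1)‖ * t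
        ≤ (∑ i ∈ Icc 1 k', ‖(Q i).eval w‖ * ‖Φ i‖) * t :=
          mul_le_mul_of_nonneg_right h7 (by linarith)
      _ = ∑ i ∈ Icc 1 k', ‖(Q i).eval w‖ * ‖Φ i‖ * t := by rw [Finset.sum_mul]
      _ ≤ ∑ i ∈ Icc 1 k', Cm * 2 ^ (k' + 1) * M ^ (k' + 1 + r) * ‖Φ (k' + 1)‖ :=
          Finset.sum_le_sum hterm
      _ = (k' : ℝ) * (Cm * 2 ^ (k' + 1) * M ^ (k' + 1 + r) * ‖Φ (k' + 1)‖) := by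
          rw [Finset.sum_const, Nat.card_Icc]
          simp [nsmul_eq_mul]
  -- lower bound on the top term
  have hlow := Stmt13Aux.eval_lc_lower hQk hub (by rw [← hρdef]; linarith) hR0
  rw [← hρdef] at hlow
  have hρR : 0 < ρ - R := by linarith
  have hfinal : ‖(Q (k' + 1)).leadingCoeff‖ * (ρ - R) ^ (k' + 1 + r) * t
      ≤ (k' : ℝ) * (Cm * 2 ^ (k' + 1) * M ^ (k' + 1 + r)) := by
    have h8 : ‖(Q (k' + 1)).leadingCoeff‖ * (ρ - R) ^ (k' + 1 + r) * ‖Φ (k' + 1)‖ * t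
        ≤ ‖(Q (k' + 1)).eval w‖ * ‖Φ (k' + 1)‖ * t := by
      refine mul_le_mul_of_nonneg_right ?_ (by linarith)
      exact mul_le_mul_of_nonneg_right hlow (norm_nonneg _)
    have h9 := le_trans h8 hsum
    have h10 : ‖(Q (k' + 1)).leadingCoeff‖ * (ρ - R) ^ (k' + 1 + r) * t * ‖Φ (k' + 1)‖
        ≤ (k' : ℝ) * (Cm * 2 ^ (k' + 1) * M ^ (k' + 1 + r)) * ‖Φ (k' + 1)‖ := by
      calc ‖(Q (k' + 1)).leadingCoeff‖ * (ρ - R) ^ (k' + 1 + r) * t * ‖Φ (k' + 1)‖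
          = ‖(Q (k' + 1)).leadingCoeff‖ * (ρ - R) ^ (k' + 1 + r) * ‖Φ (k' + 1)‖ * t := by
            ring
        _ ≤ (k' : ℝ) * (Cm * 2 ^ (k' + 1) * M ^ (k' + 1 + r) * ‖Φ (k' + 1)‖) := h9
        _ = (k' : ℝ) * (Cm * 2 ^ (k' + 1) * M ^ (k' + 1 + r)) * ‖Φ (k' + 1)‖ := by ring
    exact le_of_mul_le_mul_right h10 hΦkpos
  -- replace M by K * (ρ - R)
  set K : ℝ := max 1 (R + ε) / ε with hKdef
  have hK0 : 0 ≤ K := div_nonneg (le_trans zero_le_one (le_max_left _ _)) hε.le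
  have hMK : M ≤ K * (ρ - R) := by
    have hh := Stmt13Aux.M_le_K_mul hR0 hε hw
    rw [hMdef, hKdef]
    exact hh
  have hMpow : M ^ (k' + 1 + r) ≤ K ^ (k' + 1 + r) * (ρ - R) ^ (k' + 1 + r) := by
    rw [← mul_pow]
    exact pow_le_pow_left₀ hM0 hMK _
  have hk'0 : (0:ℝ) ≤ (k' : ℝ) := Nat.cast_nonneg k'
  have h11 : ‖(Q (k' + 1)).leadingCoeff‖ * (ρ - R) ^ (k' + 1 + r) * t
      ≤ ((k' : ℝ) * Cm * 2 ^ (k' + 1) * K ^ (k' + 1 + r)) * (ρ - R) ^ (k' + 1 + r) := by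
    refine hfinal.trans ?_
    calc (k' : ℝ) * (Cm * 2 ^ (k' + 1) * M ^ (k' + 1 + r))
        ≤ (k' : ℝ) * (Cm * 2 ^ (k' + 1) * (K ^ (k' + 1 + r) * (ρ - R) ^ (k' + 1 + r))) := by
          refine mul_le_mul_of_nonneg_left ?_ hk'0
          exact mul_le_mul_of_nonneg_left hMpow (mul_nonneg hCm0 h2nn)
      _ = ((k' : ℝ) * Cm * 2 ^ (k' + 1) * K ^ (k' + 1 + r)) * (ρ - R) ^ (k' + 1 + r) := by
          ring
  have hpowpos : 0 < (ρ - R) ^ (k' + 1 + r) := pow_pos hρR _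
  have h12 : ‖(Q (k' + 1)).leadingCoeff‖ * t
      ≤ (k' : ℝ) * Cm * 2 ^ (k' + 1) * K ^ (k' + 1 + r) := by
    have h13 : ‖(Q (k' + 1)).leadingCoeff‖ * t * (ρ - R) ^ (k' + 1 + r)
        ≤ ((k' : ℝ) * Cm * 2 ^ (k' + 1) * K ^ (k' + 1 + r)) * (ρ - R) ^ (k' + 1 + r) := by
      calc ‖(Q (k' + 1)).leadingCoeff‖ * t * (ρ - R) ^ (k' + 1 + r)
          = ‖(Q (k' + 1)).leadingCoeff‖ * (ρ - R) ^ (k' + 1 + r) * t := by ring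
        _ ≤ _ := h11
    exact le_of_mul_le_mul_right h13 hpowpos
  refine h12.trans ?_
  have hk'k : (k' : ℝ) ≤ ((k' + 1 : ℕ) : ℝ) := by push_cast; linarith
  calc (k' : ℝ) * Cm * 2 ^ (k' + 1) * K ^ (k' + 1 + r)
      ≤ ((k' + 1 : ℕ) : ℝ) * Cm * 2 ^ (k' + 1) * K ^ (k' + 1 + r) := by
        refine mul_le_mul_of_nonneg_right ?_ (pow_nonneg hK0 _)
        refine mul_le_mul_of_nonneg_right ?_ h2nn
        exact mul_le_mul_of_nonneg_right hk'k hCm0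
    _ = (((k' + 1 : ℕ) : ℝ) * Cm * 2 ^ (k' + 1)) * K ^ (k' + 1 + r) := by ring

lemma iterate_derivative_add' (j : ℕ) (p q : Polynomial ℂ) :
    derivative^[j] (p + q) = derivative^[j] p + derivative^[j] q := by
  induction j generalizing p q with
  | zero => simp
  | succ j ih =>
    rw [Function.iterate_succ_apply, Function.iterate_succ_apply, Function.iterate_succ_apply,
      derivative_add]
    exact ih _ _

lemma kill_eval {w : ℂ} (P : Polynomial ℂ) (tt ss : ℕ) (hdvd : (X - C w) ^ tt ∣ P)
    (hlt : ss < tt) : (derivative^[ss] P).eval w = 0 := by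
  have h2 : (X - C w) ^ (tt - ss) ∣ derivative^[ss] P :=
    Polynomial.pow_sub_dvd_iterate_derivative_of_pow_dvd ss hdvd
  have h3 : (X - C w) ∣ derivative^[ss] P :=
    dvd_trans (dvd_pow_self _ (by omega : tt - ss ≠ 0)) h2
  exact Polynomial.dvd_iff_isRoot.mp h3

lemma core2 {k : ℕ} (hk : 1 ≤ k) {Q : ℕ → Polynomial ℂ} {V S : Polynomial ℂ} (hS : S ≠ 0)
    {w : ℂ} (hQkw : (Q k).eval w ≠ 0)
    (hmk : k < Polynomial.rootMultiplicity w S)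
    (hpoly : (∑ i ∈ Icc 1 k, Q i * (derivative^[i] S)) + V * S = 0) :
    False := by
  set m := Polynomial.rootMultiplicity w S with hmdef
  set j := m - k with hjdef
  have hjk : j + k = m := by omega
  have hSdvd : (X - C w) ^ m ∣ S := Polynomial.pow_rootMultiplicity_dvd S w
  have heq := congrArg (fun P : Polynomial ℂ => (derivative^[j] P).eval w) hpoly
  rw [iterate_derivative_add', Polynomial.eval_add] at heq
  have hVS : (derivative^[j] (V * S)).eval w = 0 :=
    kill_eval (V * S) m j (hSdvd.mul_left V) (by omega)
  rw [hVS, add_zero, Polynomial.iterate_derivative_sum, Polynomial.eval_finset_sum] at heq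
  rw [Finset.sum_eq_single_of_mem k (Finset.mem_Icc.mpr ⟨hk, le_rfl⟩)] at heq
  · -- the k-term
    rw [Polynomial.iterate_derivative_mul, Polynomial.eval_finset_sum] at heq
    rw [Finset.sum_eq_single_of_mem j (Finset.self_mem_range_succ j)] at heq
    · rw [Nat.choose_self, Nat.sub_self, one_smul, Function.iterate_zero_apply,
        Polynomial.eval_mul] at heq
      have hDS : derivative^[j] (derivative^[k] S) = derivative^[m] S := by
        rw [← Function.iterate_add_apply, hjk]
      rw [hDS] at heq
      have hm0 : (derivative^[m] S).eval w ≠ 0 := by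
        rw [hmdef]
        exact Stmt13Aux.eval_iterate_rootMultiplicity_ne_zero hS w
      have hz1 : (derivative^[j] 0 : Polynomial ℂ).eval w = 0 := by
        rw [Polynomial.iterate_derivative_zero, Polynomial.eval_zero]
      rw [hz1] at heq
      exact (mul_ne_zero hQkw hm0) heq
    · intro a ha ha2
      have haj : a < j := by
        have := Finset.mem_range.mp ha
        omega
      have hDS : derivative^[a] (derivative^[k] S) = derivative^[a + k] S := by
        rw [← Function.iterate_add_apply]
      rw [Polynomial.eval_smul, hDS, Polynomial.eval_mul]
      have hz : (derivative^[a + k] S).eval w = 0 := by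
        have := kill_eval S m (a + k) hSdvd (by omega)
        exact this
      rw [hz, mul_zero, smul_zero]
  · intro b hb hbk
    obtain ⟨h1b, hbk'⟩ := Finset.mem_Icc.mp hb
    have hbk2 : b < k := lt_of_le_of_ne hbk' hbk
    have hdvd : (X - C w) ^ (m - b) ∣ Q b * derivative^[b] S :=
      Dvd.dvd.mul_left (Polynomial.pow_sub_dvd_iterate_derivative_of_pow_dvd b hSdvd) (Q b)
    exact kill_eval _ (m - b) j hdvd (by omega)

end Stmt13Aux

theorem stmt_13 (k r : ℕ) (hk : 1 ≤ k) (Q : ℕ → Polynomial ℂ)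
    (hdeg : ∀ i, 1 ≤ i → i ≤ k → (Q i).degree ≤ (i + r : ℕ))
    (hQk : (Q k).degree = (k + r : ℕ))
    (R : ℝ) (hR : IsGreatest ((fun z : ℂ => ‖z‖) '' {z : ℂ | z ∈ (Q k).roots}) R)
    (δ : ℝ) (hδ : 0 < δ) :
    ∃ N : ℕ, ∀ n ≥ N, ∀ V S : Polynomial ℂ, V.degree ≤ (r : ℕ) → S ≠ 0 →
      S.natDegree = n →
      ∑ i ∈ Finset.Icc 1 k, Q i * (Polynomial.derivative^[i] S) + V * S = 0 →
      (∀ z ∈ V.roots, ‖z‖ ≤ R + δ) ∧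
      (∀ z ∈ S.roots, ‖z‖ ≤ R + δ) := by
  classical
  obtain ⟨⟨x₀, hx₀, hx₀R⟩, hRub⟩ := hR
  have hR0 : 0 ≤ R := by rw [← hx₀R]; exact norm_nonneg _
  have hub : ∀ x ∈ (Q k).roots, ‖x‖ ≤ R := by
    intro x hx
    exact hRub ⟨x, hx, rfl⟩
  have hε : 0 < δ / 2 := by linarith
  have hQkbot : (Q k).degree ≠ ⊥ := by
    rw [hQk]
    exact WithBot.coe_ne_bot
  have hQk0 : Q k ≠ 0 := fun h => hQkbot (by rw [h, Polynomial.degree_zero])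
  have hq0 : (0 : ℝ) < ‖(Q k).leadingCoeff‖ :=
    norm_pos_iff.mpr (Polynomial.leadingCoeff_ne_zero.mpr hQk0)
  set q : ℝ := ‖(Q k).leadingCoeff‖ with hqdef
  set Cm : ℝ := ∑ i ∈ Finset.Icc 1 k, ∑ a ∈ Finset.range (k + r + 1), ‖(Q i).coeff a‖
    with hCmdef
  set K : ℝ := max 1 (R + δ / 2) / (δ / 2) with hKdef
  set B : ℝ := (k * Cm * 2 ^ k) * K ^ (k + r) / q with hBdef
  refine ⟨k + 1 + ⌈B⌉₊, ?_⟩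
  intro n hn V S hV hS hSdeg hpoly
  have hkn : k ≤ n := by omega
  have hnB : B < (n : ℝ) - k + 1 := by
    have h1 : B ≤ (⌈B⌉₊ : ℝ) := Nat.le_ceil B
    have h2 : ((k + 1 + ⌈B⌉₊ : ℕ) : ℝ) ≤ (n : ℝ) := by exact_mod_cast hn
    push_cast at h2
    linarith
  have key : ∀ w : ℂ, R + δ / 2 < ‖w‖ → (∀ ξ ∈ S.roots, ‖ξ‖ ≤ ‖w‖) →
      V.eval w * S.eval w = 0 → False := by
    intro w hw hroots hVS
    have hQkw : (Q k).eval w ≠ 0 := by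
      intro h0
      have hmem : w ∈ (Q k).roots := (Polynomial.mem_roots hQk0).2 h0
      have := hub w hmem
      linarith
    rcases le_or_gt (Polynomial.rootMultiplicity w S) k with hmk | hmk
    · have heval : ∑ i ∈ Finset.Icc 1 k, (Q i).eval w * ((derivative^[i] S).eval w) = 0 := by
        have h := congrArg (Polynomial.eval w) hpoly
        rw [Polynomial.eval_add, Polynomial.eval_mul, Polynomial.eval_zero,
          Polynomial.eval_finset_sum] at h
        simp only [Polynomial.eval_mul] at h
        rw [hVS, add_zero] at h
        exact h
      have hcore := Stmt13Aux.core hk hdeg hQk hR0 hub hε hkn hS hSdeg hw hroots hmk heval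
      have hqB : (k * Cm * 2 ^ k) * K ^ (k + r) = B * q := by
        rw [hBdef]
        field_simp
      rw [← hqdef, ← hCmdef, ← hKdef] at hcore
      rw [hqB] at hcore
      have ht : (n : ℝ) - k + 1 ≤ B :=
        le_of_mul_le_mul_left (by linarith [hcore] : q * ((n : ℝ) - k + 1) ≤ q * B) hq0
      linarith
    · exact Stmt13Aux.core2 hk hS hQkw hmk hpoly
  have hSroots : ∀ ξ ∈ S.roots, ‖ξ‖ ≤ R + δ / 2 := by
    by_contra hcon
    push_neg at hcon
    obtain ⟨ξ₁, hξ₁, hξ₁gt⟩ := hcon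
    have hne : S.roots.toFinset.Nonempty := ⟨ξ₁, Multiset.mem_toFinset.mpr hξ₁⟩
    obtain ⟨z₀, hz₀mem, hz₀max⟩ :=
      Finset.exists_max_image S.roots.toFinset (fun z => ‖z‖) hne
    have hz₀ : z₀ ∈ S.roots := Multiset.mem_toFinset.mp hz₀mem
    have hmax : ∀ ξ ∈ S.roots, ‖ξ‖ ≤ ‖z₀‖ := fun ξ hξ =>
      hz₀max ξ (Multiset.mem_toFinset.mpr hξ)
    have hwgt : R + δ / 2 < ‖z₀‖ := lt_of_lt_of_le hξ₁gt (hmax ξ₁ hξ₁)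
    refine key z₀ hwgt hmax ?_
    have hz : S.eval z₀ = 0 := Polynomial.isRoot_of_mem_roots hz₀
    rw [hz, mul_zero]
  refine ⟨?_, ?_⟩
  · intro z hz
    by_contra hgt
    push_neg at hgt
    have hzgt : R + δ / 2 < ‖z‖ := by linarith
    refine key z hzgt (fun ξ hξ => le_trans (hSroots ξ hξ) (by linarith)) ?_
    have hz0 : V.eval z = 0 := Polynomial.isRoot_of_mem_roots hz
    rw [hz0, zero_mul]
  · intro z hz
    have := hSroots z hz
    linarith
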